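/- Let ℱ be the singleton family of dangers consisting of the trivial danger of size 2, and let G be a graph on at least two vertices, viewed as a 2-uniform marked hypergraph with no marked vertex. Then G is a Breaker win if and only if J_1(ℱ,G) holds (equivalently, if and only if the edges of G are pairwise disjoint). -/
import Mathlib


namespace MB

/-- A marked hypergraph: a finite vertex set, an edge set of finite subsets of vertices,
and a set of marked vertices. -/
structure MarkedHypergraph (V : Type) where
  verts : Finset V
  edges : Finset (Finset V)
  marked : Finset V

namespace MarkedHypergraph

variable {V : Type} [DecidableEq V]

/-- The structural requirements on a marked hypergraph: nonempty vertex set, edges are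
nonempty subsets of the vertex set, marked vertices are vertices. -/
def IsValid (H : MarkedHypergraph V) : Prop :=
  H.verts.Nonempty ∧ (∀ e ∈ H.edges, e ⊆ H.verts ∧ e.Nonempty) ∧ H.marked ⊆ H.verts

/-- `k`-uniformity: every edge has exactly `k` vertices. -/
def IsUniform (H : MarkedHypergraph V) (k : ℕ) : Prop :=
  ∀ e ∈ H.edges, e.card = k

/-- `H^{+x}`: mark the vertex `x`. -/
def plus (H : MarkedHypergraph V) (x : V) : MarkedHypergraph V :=
  ⟨H.verts, H.edges, insert x H.marked⟩

/-- `H^{-y}`: remove the vertex `y` and all edges containing it. -/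
def minus (H : MarkedHypergraph V) (y : V) : MarkedHypergraph V :=
  ⟨H.verts.erase y, H.edges.filter fun e => y ∉ e, H.marked.erase y⟩

/-- `X` is a subhypergraph of `H`. -/
def IsSub (X H : MarkedHypergraph V) : Prop :=
  X.verts ⊆ H.verts ∧ X.edges ⊆ H.edges ∧ X.marked = X.verts ∩ H.marked

/-- A trivial Maker win: some edge has at most one non-marked vertex. -/
def TrivialMakerWin (H : MarkedHypergraph V) : Prop :=
  ∃ e ∈ H.edges, (e \ H.marked).card ≤ 1

theorem card_free_lt (H : MarkedHypergraph V) (x y : V)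
    (hy : y ∈ (H.plus x).verts \ (H.plus x).marked) :
    (((H.plus x).minus y).verts \ ((H.plus x).minus y).marked).card
      < (H.verts \ H.marked).card := by
  have hy' : y ∈ H.verts \ insert x H.marked := hy
  rw [Finset.mem_sdiff] at hy'
  have hyv : y ∈ H.verts := hy'.1
  have hym : y ∉ H.marked := fun h => hy'.2 (Finset.mem_insert_of_mem h)
  show (H.verts.erase y \ (insert x H.marked).erase y).card < (H.verts \ H.marked).card
  calc (H.verts.erase y \ (insert x H.marked).erase y).card
      ≤ ((H.verts \ H.marked).erase y).card := by
        apply Finset.card_le_card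
        intro v hv
        rw [Finset.mem_sdiff, Finset.mem_erase] at hv
        rw [Finset.mem_erase, Finset.mem_sdiff]
        exact ⟨hv.1.1, hv.1.2, fun hvm =>
          hv.2 (Finset.mem_erase.mpr ⟨hv.1.1, Finset.mem_insert_of_mem hvm⟩)⟩
    _ < (H.verts \ H.marked).card :=
        Finset.card_erase_lt_of_mem (Finset.mem_sdiff.mpr ⟨hyv, hym⟩)

/-- Maker win, defined by recursion on the number of non-marked vertices:
if at most one non-marked vertex remains, Maker wins iff the position is a trivial Maker
win; otherwise Maker wins iff he has a pick `x` such that for every answer `y` of Breaker,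
the resulting position is a Maker win. -/
def MakerWin (H : MarkedHypergraph V) : Prop :=
  if (H.verts \ H.marked).card ≤ 1 then TrivialMakerWin H
  else ∃ x ∈ H.verts \ H.marked,
    ∀ y ∈ (H.plus x).verts \ (H.plus x).marked, MakerWin ((H.plus x).minus y)
termination_by (H.verts \ H.marked).card
decreasing_by exact card_free_lt H _ _ (by assumption)

/-- Breaker win: not a Maker win. -/
def BreakerWin (H : MarkedHypergraph V) : Prop := ¬ H.MakerWin

open Classical in
/-- `τ_M(H)`: the minimum number of rounds Maker needs to claim a fully marked edge
(`⊤` if Breaker wins). -/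
noncomputable def tauM (H : MarkedHypergraph V) : ℕ∞ :=
  if TrivialMakerWin H then H.edges.inf fun e => ((e \ H.marked).card : ℕ∞)
  else if (H.verts \ H.marked).card ≤ 1 then (⊤ : ℕ∞)
  else 1 + (H.verts \ H.marked).inf fun x =>
    ((H.plus x).verts \ (H.plus x).marked).attach.sup fun y =>
      tauM ((H.plus x).minus y.1)
termination_by (H.verts \ H.marked).card
decreasing_by exact card_free_lt H _ _ y.2

end MarkedHypergraph

open MarkedHypergraph

variable {V : Type} [DecidableEq V]

/-- The intersection `I_H(𝒳)` of a collection `𝒳` of marked hypergraphs in `H`. -/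
def inter (H : MarkedHypergraph V) (𝒳 : Set (MarkedHypergraph V)) : Set V :=
  {y | y ∈ H.verts ∧ y ∉ H.marked ∧ ∀ X ∈ 𝒳, y ∈ X.verts}

/-- The union of a finite collection of marked hypergraphs. -/
def unionOf (O : Finset (MarkedHypergraph V)) : MarkedHypergraph V :=
  ⟨O.sup MarkedHypergraph.verts, O.sup MarkedHypergraph.edges, O.sup MarkedHypergraph.marked⟩

/-- Isomorphism of pointed marked hypergraphs. -/
def PointedIso (X : MarkedHypergraph V) (x : V) (Y : MarkedHypergraph V) (y : V) : Prop :=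
  ∃ φ : V → V, Set.InjOn φ ↑X.verts ∧ X.verts.image φ = Y.verts ∧
    (∀ e : Finset V, e ⊆ X.verts → (e ∈ X.edges ↔ e.image φ ∈ Y.edges)) ∧
    (∀ v ∈ X.verts, (v ∈ X.marked ↔ φ v ∈ Y.marked)) ∧ φ x = y

/-- `(D,x)` is a danger: `x` is a non-marked vertex and `D^{+x}` is a Maker win. -/
def IsDanger (D : MarkedHypergraph V) (x : V) : Prop :=
  x ∈ D.verts ∧ x ∉ D.marked ∧ (D.plus x).MakerWin

/-- A family of dangers: a set of pointed marked hypergraphs, all of which are dangers. -/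
def IsDangerFamily (F : Set (MarkedHypergraph V × V)) : Prop :=
  ∀ p ∈ F, IsDanger p.1 p.2

/-- The collection of all dangers at `x` in `H`: subhypergraphs `D` of `H` containing `x`
such that `D^{+x}` is a Maker win. -/
def dangersAt (H : MarkedHypergraph V) (x : V) : Set (MarkedHypergraph V) :=
  {D | D.IsValid ∧ D.IsSub H ∧ x ∈ D.verts ∧ (D.plus x).MakerWin}

/-- `xℱ(H)`: the collection of subhypergraphs `X` of `H` containing `x` such that `(X,x)`
is isomorphic to a member of the family `F`. -/
def xFam (F : Set (MarkedHypergraph V × V)) (H : MarkedHypergraph V) (x : V) :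
    Set (MarkedHypergraph V) :=
  {X | X.IsValid ∧ X.IsSub H ∧ x ∈ X.verts ∧ ∃ p ∈ F, PointedIso X x p.1 p.2}

/-- `J F r H` is the property `J_r(ℱ,H)` (for `r ≥ 1`; `J F 0 H` is `True` by convention). -/
def J (F : Set (MarkedHypergraph V × V)) : ℕ → MarkedHypergraph V → Prop
  | 0, _ => True
  | r + 1, H => ∀ x ∈ H.verts \ H.marked,
      ∃ y ∈ inter (H.plus x) (xFam F H x), J F r ((H.plus x).minus y)

/-- `P` is an `ab`-path (in a 3-uniform setting) of length `L`. -/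
def IsPathLen (P : MarkedHypergraph V) (a b : V) (L : ℕ) : Prop :=
  (L = 0 ∧ a = b ∧ P.verts = {a} ∧ P.edges = ∅) ∨
  (1 ≤ L ∧ a ≠ b ∧ ∃ e : ℕ → Finset V,
    P.edges = (Finset.range L).image e ∧
    P.verts = (Finset.range L).biUnion e ∧
    (∀ i, i < L → (e i).card = 3) ∧
    (∀ i j, i < L → j < L → i ≠ j → e i ≠ e j) ∧
    a ∈ e 0 ∧ b ∈ e (L - 1) ∧
    (∀ i, i + 1 < L → (e i ∩ e (i + 1)).card = 1) ∧
    (∀ i j, i + 2 ≤ j → j < L → e i ∩ e j = ∅) ∧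
    (∀ i, 1 ≤ i → i < L → a ∉ e i) ∧
    (∀ i, i + 1 < L → b ∉ e i))

/-- `P` is an `ab`-path. -/
def IsPath (P : MarkedHypergraph V) (a b : V) : Prop := ∃ L, IsPathLen P a b L

/-- `C` is an `a`-cycle of length `L`. -/
def IsCycleLen (C : MarkedHypergraph V) (a : V) (L : ℕ) : Prop :=
  2 ≤ L ∧ ∃ e : ℕ → Finset V,
    C.edges = (Finset.range L).image e ∧
    C.verts = (Finset.range L).biUnion e ∧
    (∀ i, i < L → (e i).card = 3) ∧
    (∀ i j, i < L → j < L → i ≠ j → e i ≠ e j) ∧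
    a ∈ e 0 ∧ a ∈ e (L - 1) ∧
    (∀ i, 0 < i → i + 1 < L → a ∉ e i) ∧
    (L = 2 → (e 0 ∩ e 1).card = 2) ∧
    (3 ≤ L → (e 0 ∩ e (L - 1) = {a} ∧ ∀ i, i + 1 < L → (e i ∩ e (i + 1)).card = 1)) ∧
    (∀ i j, i < j → j < L → 2 ≤ j - i → j - i ≤ L - 2 → e i ∩ e j = ∅)

/-- `C` is an `a`-cycle. -/
def IsCycle (C : MarkedHypergraph V) (a : V) : Prop := ∃ L, IsCycleLen C a L

/-- `T` is an `a`-tadpole: the union of an `ab`-path and a `b`-cycle meeting only at `b`. -/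
def IsTadpole (T : MarkedHypergraph V) (a : V) : Prop :=
  ∃ b P C, IsPath P a b ∧ IsCycle C b ∧ P.verts ∩ C.verts = {b} ∧
    T.verts = P.verts ∪ C.verts ∧ T.edges = P.edges ∪ C.edges

/-- `S` is an `x`-snake: an `xm`-path of positive length with `m` marked. -/
def IsSnake (S : MarkedHypergraph V) (x : V) : Prop :=
  ∃ m L, 1 ≤ L ∧ IsPathLen S x m L ∧ m ∈ S.marked

/-- `N` is a nunchaku: an `ab`-path of positive length with marked set exactly `{a,b}`. -/
def IsNunchaku (N : MarkedHypergraph V) : Prop :=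
  ∃ a b L, 1 ≤ L ∧ IsPathLen N a b L ∧ N.marked = {a, b}

/-- `C` is an `a`-necklace: an `a`-cycle with marked set exactly `{a}`. -/
def IsNecklace (C : MarkedHypergraph V) (a : V) : Prop :=
  ∃ L, IsCycleLen C a L ∧ C.marked = {a}

/-- The family `𝒮` of pointed snakes with exactly one marked vertex. -/
def famS : Set (MarkedHypergraph V × V) := {p | IsSnake p.1 p.2 ∧ p.1.marked.card = 1}

/-- The family `𝒞` of pointed cycles with no marked vertex. -/
def famC : Set (MarkedHypergraph V × V) := {p | IsCycle p.1 p.2 ∧ p.1.marked = ∅}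

/-- The family `𝒯` of pointed tadpoles with no marked vertex. -/
def famT : Set (MarkedHypergraph V × V) := {p | IsTadpole p.1 p.2 ∧ p.1.marked = ∅}

/-- `𝒟₀ = 𝒮 ∪ 𝒞`. -/
def famD0 : Set (MarkedHypergraph V × V) := famS ∪ famC

/-- `𝒟₁ = 𝒮 ∪ 𝒯`. -/
def famD1 : Set (MarkedHypergraph V × V) := famS ∪ famT

/-- `obs(ℱ)`: pointed marked hypergraphs `(D,x)` which, for some `ℱ`-dangerous vertex `z`,
are the union of a collection `𝒪` of subhypergraphs, each of which is (or becomes, once `x`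
is marked) an `ℱ`-danger at `z`, with `I_{D^{+x+z}}(𝒪) = ∅`. -/
def obs (F : Set (MarkedHypergraph V × V)) : Set (MarkedHypergraph V × V) :=
  {p | p.2 ∈ p.1.verts ∧ p.2 ∉ p.1.marked ∧
    ∃ z, z ∈ p.1.verts ∧ z ∉ p.1.marked ∧ z ≠ p.2 ∧
      ∃ O : Set (MarkedHypergraph V),
        (∀ X ∈ O, X.IsValid ∧ X.IsSub p.1) ∧
        (∀ X ∈ O, p.2 ∈ X.verts → X.plus p.2 ∈ xFam F (p.1.plus p.2) z) ∧
        (∀ X ∈ O, p.2 ∉ X.verts → X ∈ xFam F p.1 z) ∧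
        (∀ v ∈ p.1.verts, ∃ X ∈ O, v ∈ X.verts) ∧
        (∀ e ∈ p.1.edges, ∃ X ∈ O, e ∈ X.edges) ∧
        (∀ m ∈ p.1.marked, ∃ X ∈ O, m ∈ X.marked) ∧
        inter ((p.1.plus p.2).plus z) O = ∅}

/-- `obsr(ℱ)`: the members `(D,x)` of `obs(ℱ)` such that `D` contains no `ℱ`-danger at `x`. -/
def obsr (F : Set (MarkedHypergraph V × V)) : Set (MarkedHypergraph V × V) :=
  {p | p ∈ obs F ∧ xFam F p.1 p.2 = ∅}

/-- `ℱ^{*r}`. -/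
def star (F : Set (MarkedHypergraph V × V)) : ℕ → Set (MarkedHypergraph V × V)
  | 0 => F
  | r + 1 => F ∪ obs (star F r)

/-- `𝒟₂ = 𝒟₁ ∪ obsr(𝒟₁)`. -/
def famD2 : Set (MarkedHypergraph V × V) := famD1 ∪ obsr famD1

/-- The lengths of nunchakus contained in `H`. -/
def nunchakuLengths (H : MarkedHypergraph V) : Set ℕ :=
  {L | 1 ≤ L ∧ ∃ N a b, N.IsSub H ∧ IsPathLen N a b L ∧ N.marked = {a, b}}

/-- `H` contains a fully marked edge, a nunchaku, or a necklace. -/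
def WinPattern (H : MarkedHypergraph V) : Prop :=
  (∃ e ∈ H.edges, e ⊆ H.marked) ∨ (∃ N, N.IsSub H ∧ IsNunchaku N) ∨
    (∃ C a, C.IsSub H ∧ IsNecklace C a)

/-- `Wk k H`: Maker can force that after `k` rounds of play the updated marked hypergraph
contains a fully marked edge, a nunchaku or a necklace. -/
def Wk : ℕ → MarkedHypergraph V → Prop
  | 0, H => WinPattern H
  | k + 1, H => ∃ x ∈ H.verts \ H.marked,
      ∀ y ∈ (H.plus x).verts \ (H.plus x).marked, Wk k ((H.plus x).minus y)

end MB
/-- The family consisting of the trivial danger of size 2. -/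
def MB.famTriv2 {V : Type} [DecidableEq V] : Set (MB.MarkedHypergraph V × V) :=
  {p | ∃ v, v ≠ p.2 ∧ p.1.verts = {p.2, v} ∧
    p.1.edges = {({p.2, v} : Finset V)} ∧ p.1.marked = ∅}

namespace MBAux

open MB MB.MarkedHypergraph

variable {V : Type} [DecidableEq V]

/-- Edge of size 2 containing x. -/
lemma edge_two_mem {e : Finset V} {x : V} (hc : e.card = 2) (hx : x ∈ e) :
    ∃ w, w ≠ x ∧ e = {x, w} := by
  obtain ⟨a, b, hab, rfl⟩ := Finset.card_eq_two.mp hc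
  rcases Finset.mem_insert.mp hx with rfl | hb
  · exact ⟨b, fun h => hab h.symm, rfl⟩
  · rw [Finset.mem_singleton] at hb
    subst hb
    exact ⟨a, fun h => hab h, by rw [Finset.pair_comm]⟩

/-- Trivial Maker wins are Maker wins (given edges are subsets of vertices). -/
lemma trivial_makerWin : ∀ n (H : MarkedHypergraph V), (H.verts \ H.marked).card = n →
    (∀ e ∈ H.edges, e ⊆ H.verts) → TrivialMakerWin H → H.MakerWin := by
  intro n
  induction n using Nat.strong_induction_on with
  | _ n ih =>
    intro H hn hsub ht
    rw [MakerWin]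
    split_ifs with hle
    · exact ht
    · obtain ⟨e, he, hce⟩ := ht
      -- choose x : a free vertex, in e if possible
      have hfree2 : 2 ≤ (H.verts \ H.marked).card := by omega
      obtain ⟨x, hx, hxe⟩ :
          ∃ x ∈ H.verts \ H.marked, ∀ w ∈ e, w ∉ H.marked → w = x := by
        rcases Nat.le_one_iff_eq_zero_or_eq_one.mp hce with h0 | h1
        · obtain ⟨x, hx⟩ := Finset.card_pos.mp (show 0 < (H.verts \ H.marked).card by omega)
          refine ⟨x, hx, fun w hw hwm => absurd ?_ hwm⟩
          by_contra hwm'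
          have : w ∈ e \ H.marked := Finset.mem_sdiff.mpr ⟨hw, hwm'⟩
          rw [Finset.card_eq_zero.mp h0] at this
          exact absurd this (Finset.notMem_empty w)
        · obtain ⟨v, hv⟩ := Finset.card_eq_one.mp h1
          have hv' : v ∈ e \ H.marked := hv ▸ Finset.mem_singleton_self v
          rw [Finset.mem_sdiff] at hv'
          refine ⟨v, Finset.mem_sdiff.mpr ⟨hsub e he hv'.1, hv'.2⟩, fun w hw hwm => ?_⟩
          have : w ∈ e \ H.marked := Finset.mem_sdiff.mpr ⟨hw, hwm⟩
          rw [hv] at this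
          exact Finset.mem_singleton.mp this
      refine ⟨x, hx, fun y hy => ?_⟩
      have hy' := Finset.mem_sdiff.mp hy
      have hyx : y ≠ x := fun h => hy'.2 (h ▸ Finset.mem_insert_self x H.marked)
      have hym : y ∉ H.marked := fun h => hy'.2 (Finset.mem_insert_of_mem h)
      have hye : y ∉ e := fun h => hyx (hxe y h hym)
      apply ih _ (hn ▸ card_free_lt H x y hy) _ rfl
      · intro f hf
        have hf' : f ∈ H.edges ∧ y ∉ f := Finset.mem_filter.mp hf
        intro v hv
        exact Finset.mem_erase.mpr ⟨fun h => hf'.2 (h ▸ hv), hsub f hf'.1 hv⟩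
      · refine ⟨e, Finset.mem_filter.mpr ⟨he, hye⟩, ?_⟩
        have : e \ ((H.plus x).minus y).marked = ∅ := by
          rw [Finset.eq_empty_iff_forall_notMem]
          intro w hw
          rw [Finset.mem_sdiff] at hw
          apply hw.2
          show w ∈ (insert x H.marked).erase y
          refine Finset.mem_erase.mpr ⟨fun h => hye (h ▸ hw.1), ?_⟩
          by_cases hwm : w ∈ H.marked
          · exact Finset.mem_insert_of_mem hwm
          · exact (hxe w hw.1 hwm) ▸ Finset.mem_insert_self x H.marked
        rw [this]
        simp

/-- Matchings are Breaker wins. -/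
lemma matching_breaker : ∀ n (H : MarkedHypergraph V), (H.verts \ H.marked).card = n →
    (∀ e ∈ H.edges, e ⊆ H.verts ∧ e.card = 2 ∧ ∀ v ∈ e, v ∉ H.marked) →
    (∀ e ∈ H.edges, ∀ f ∈ H.edges, e ≠ f → e ∩ f = ∅) →
    ¬ H.MakerWin := by
  intro n
  induction n using Nat.strong_induction_on with
  | _ n ih =>
    intro H hn hinv hmat
    rw [MakerWin]
    split_ifs with hle
    · rintro ⟨e, he, hce⟩
      obtain ⟨_, hc2, hem⟩ := hinv e he
      have : e \ H.marked = e := by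
        rw [Finset.sdiff_eq_self_iff_disjoint, Finset.disjoint_left]
        exact hem
      rw [this, hc2] at hce
      omega
    · rintro ⟨x, hx, hall⟩
      push_neg at hle
      have hx' := Finset.mem_sdiff.mp hx
      -- choose Breaker's answer y
      obtain ⟨y, hy, hyE⟩ : ∃ y ∈ (H.plus x).verts \ (H.plus x).marked,
          ∀ f ∈ H.edges, x ∈ f → y ∈ f := by
        by_cases hxe : ∃ e ∈ H.edges, x ∈ e
        · obtain ⟨e, he, hxe⟩ := hxe
          obtain ⟨hes, hc2, hem⟩ := hinv e he
          obtain ⟨z, hzx, hze⟩ := edge_two_mem hc2 hxe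
          have hze' : z ∈ e := hze ▸ Finset.mem_insert_of_mem (Finset.mem_singleton_self z)
          refine ⟨z, Finset.mem_sdiff.mpr ⟨hes hze', ?_⟩, fun f hf hxf => ?_⟩
          · intro h
            rcases Finset.mem_insert.mp h with h | h
            exacts [hzx h, hem z hze' h]
          · have : f = e := by
              by_contra hne
              have := hmat f hf e he hne
              have : x ∈ f ∩ e := Finset.mem_inter.mpr ⟨hxf, hxe⟩
              rw [hmat f hf e he hne] at this
              exact Finset.notMem_empty x this
            rw [this]; exact hze'
        · push_neg at hxe
          have : ((H.verts \ H.marked).erase x).Nonempty := by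
            rw [← Finset.card_pos, Finset.card_erase_of_mem hx]
            omega
          obtain ⟨y, hy⟩ := this
          rw [Finset.mem_erase, Finset.mem_sdiff] at hy
          refine ⟨y, Finset.mem_sdiff.mpr ⟨hy.2.1, fun h => ?_⟩, fun f hf hxf => absurd hxf (hxe f hf)⟩
          rcases Finset.mem_insert.mp h with h | h
          exacts [hy.1 h, hy.2.2 h]
      refine ih _ (hn ▸ card_free_lt H x y hy) _ rfl ?_ ?_ (hall y hy)
      · intro f hf
        have hf2 : f ∈ H.edges ∧ y ∉ f := Finset.mem_filter.mp hf
        obtain ⟨hfs, hc2, hfm⟩ := hinv f hf2.1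
        refine ⟨fun v hv => Finset.mem_erase.mpr ⟨fun h => hf2.2 (h ▸ hv), hfs hv⟩, hc2,
          fun v hv hvm => ?_⟩
        have hvm' : v ∈ insert x H.marked := Finset.mem_of_mem_erase hvm
        rcases Finset.mem_insert.mp hvm' with heq | h
        · exact hf2.2 (hyE f hf2.1 (heq ▸ hv))
        · exact hfm v hv h
      · intro e he f hf hef
        have he : e ∈ H.edges ∧ y ∉ e := Finset.mem_filter.mp he
        have hf : f ∈ H.edges ∧ y ∉ f := Finset.mem_filter.mp hf
        exact hmat e he.1 f hf.1 hef

/-- Non-matchings are Maker wins. -/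
lemma nonmatching_maker (G : MarkedHypergraph V) (hval : G.IsValid)
    (hunif : G.IsUniform 2) (hm : G.marked = ∅)
    (e f : Finset V) (he : e ∈ G.edges) (hf : f ∈ G.edges) (hef : e ≠ f)
    (x : V) (hxe : x ∈ e) (hxf : x ∈ f) : G.MakerWin := by
  have hsubE : ∀ g ∈ G.edges, g ⊆ G.verts := fun g hg => (hval.2.1 g hg).1
  have hxv : x ∈ G.verts := hsubE e he hxe
  rw [MakerWin]
  split_ifs with hle
  · -- impossible: at most one free vertex but e has two free vertices
    exfalso
    have : e \ G.marked = e := by rw [hm]; simp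
    have h2 : (e \ G.marked).card = 2 := by rw [this]; exact hunif e he
    have : e \ G.marked ⊆ G.verts \ G.marked :=
      Finset.sdiff_subset_sdiff (hsubE e he) le_rfl
    have := Finset.card_le_card this
    omega
  · refine ⟨x, Finset.mem_sdiff.mpr ⟨hxv, by rw [hm]; exact Finset.notMem_empty x⟩,
      fun y hy => ?_⟩
    have hy' := Finset.mem_sdiff.mp hy
    have hyx : y ≠ x := fun h => hy'.2 (h ▸ Finset.mem_insert_self x G.marked)
    -- one of e, f avoids y
    have hsurv : ∃ g ∈ G.edges, x ∈ g ∧ y ∉ g := by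
      by_cases hye : y ∈ e
      · refine ⟨f, hf, hxf, fun hyf => ?_⟩
        obtain ⟨a, hax, hea⟩ := edge_two_mem (hunif e he) hxe
        obtain ⟨b, hbx, hfb⟩ := edge_two_mem (hunif f hf) hxf
        have hya : y = a := by
          rcases Finset.mem_insert.mp (hea ▸ hye) with h | h
          exacts [absurd h hyx, Finset.mem_singleton.mp h]
        have hyb : y = b := by
          rcases Finset.mem_insert.mp (hfb ▸ hyf) with h | h
          exacts [absurd h hyx, Finset.mem_singleton.mp h]
        exact hef (by rw [hea, hfb, ← hya, ← hyb])
      · exact ⟨e, he, hxe, hye⟩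
    obtain ⟨g, hg, hxg, hyg⟩ := hsurv
    apply trivial_makerWin _ _ rfl
    · intro h hh
      have hh : h ∈ G.edges ∧ y ∉ h := Finset.mem_filter.mp hh
      intro v hv
      exact Finset.mem_erase.mpr ⟨fun hvy => hh.2 (hvy ▸ hv), hsubE h hh.1 hv⟩
    · refine ⟨g, Finset.mem_filter.mpr ⟨hg, hyg⟩, ?_⟩
      obtain ⟨a, hax, hga⟩ := edge_two_mem (hunif g hg) hxg
      have : g \ ((G.plus x).minus y).marked ⊆ {a} := by
        intro v hv
        rw [Finset.mem_sdiff] at hv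
        rcases Finset.mem_insert.mp (hga ▸ hv.1) with rfl | h
        · exfalso
          apply hv.2
          show v ∈ (insert v G.marked).erase y
          exact Finset.mem_erase.mpr ⟨fun hvy => hyg (hvy ▸ hxg), Finset.mem_insert_self v _⟩
        · exact h
      calc (g \ ((G.plus x).minus y).marked).card ≤ ({a} : Finset V).card :=
            Finset.card_le_card this
        _ = 1 := Finset.card_singleton a

/-- Membership characterization for `xFam famTriv2`. -/
lemma mem_xfam {G X : MarkedHypergraph V} {x : V} (hX : X ∈ xFam famTriv2 G x) :
    X.verts ∈ G.edges ∧ x ∈ X.verts := by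
  obtain ⟨hXval, hXsub, hx, p, hp, φ, hinj, himg, hedge, _, _⟩ := hX
  obtain ⟨v, hvp, hverts, hedges, _⟩ := hp
  have : X.verts ∈ X.edges := by
    rw [hedge X.verts (subset_refl _), himg, hverts, hedges]
    exact Finset.mem_singleton_self _
  exact ⟨hXsub.2.1 this, hx⟩

/-- Each edge through `x` gives a member of `xFam famTriv2`. -/
lemma edge_mem_xfam {G : MarkedHypergraph V} (hval : G.IsValid) (hunif : G.IsUniform 2)
    (hm : G.marked = ∅) {e : Finset V} {x : V} (he : e ∈ G.edges) (hxe : x ∈ e) :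
    (⟨e, {e}, ∅⟩ : MarkedHypergraph V) ∈ xFam famTriv2 G x := by
  obtain ⟨w, hwx, hew⟩ := edge_two_mem (hunif e he) hxe
  refine ⟨⟨⟨x, hxe⟩, ?_, Finset.empty_subset _⟩,
    ⟨(hval.2.1 e he).1, Finset.singleton_subset_iff.mpr he, by rw [hm]; simp⟩, hxe,
    (⟨e, {e}, ∅⟩, x), ⟨w, hwx, hew, by rw [hew], rfl⟩,
    id, Set.injOn_id _, Finset.image_id, fun e' _ => by rw [Finset.image_id], fun v _ => Iff.rfl, rfl⟩
  intro f hf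
  rw [Finset.mem_singleton] at hf
  subst hf
  exact ⟨subset_refl _, ⟨x, hxe⟩⟩

end MBAux

/-- Theorem 1.22: on graphs, Breaker wins iff `J_1` of the trivial danger of size 2 holds,
equivalently iff the graph is a matching. -/
theorem statement9 {V : Type} [DecidableEq V] (G : MB.MarkedHypergraph V)
    (hval : G.IsValid) (hunif : G.IsUniform 2) (hm : G.marked = ∅)
    (hcard : 2 ≤ G.verts.card) :
    (G.BreakerWin ↔ MB.J MB.famTriv2 1 G) ∧
    (G.BreakerWin ↔ ∀ e ∈ G.edges, ∀ f ∈ G.edges, e ≠ f → e ∩ f = ∅) := by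
  have hBWmat : G.BreakerWin ↔ ∀ e ∈ G.edges, ∀ f ∈ G.edges, e ≠ f → e ∩ f = ∅ := by
    constructor
    · intro hbw e he f hf hef
      by_contra hne
      obtain ⟨x, hx⟩ := Finset.nonempty_iff_ne_empty.mpr hne
      rw [Finset.mem_inter] at hx
      exact hbw (MBAux.nonmatching_maker G hval hunif hm e f he hf hef x hx.1 hx.2)
    · intro hmat
      refine MBAux.matching_breaker _ G rfl (fun e he => ⟨(hval.2.1 e he).1, hunif e he,
        fun v _ hv => by rw [hm] at hv; exact Finset.notMem_empty v hv⟩) hmat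
  have hMatJ : (∀ e ∈ G.edges, ∀ f ∈ G.edges, e ≠ f → e ∩ f = ∅) ↔ MB.J MB.famTriv2 1 G := by
    constructor
    · intro hmat
      show ∀ x ∈ G.verts \ G.marked,
        ∃ y ∈ MB.inter (G.plus x) (MB.xFam MB.famTriv2 G x), True
      intro x hx
      have hxv : x ∈ G.verts := (Finset.mem_sdiff.mp hx).1
      by_cases hxe : ∃ e ∈ G.edges, x ∈ e
      · obtain ⟨e, he, hxe⟩ := hxe
        obtain ⟨w, hwx, hew⟩ := MBAux.edge_two_mem (hunif e he) hxe
        have hwe : w ∈ e := hew ▸ Finset.mem_insert_of_mem (Finset.mem_singleton_self w)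
        refine ⟨w, ⟨(hval.2.1 e he).1 hwe, ?_, fun X hX => ?_⟩, trivial⟩
        · show w ∉ insert x G.marked
          rw [hm]
          simpa using hwx
        · obtain ⟨hXe, hXx⟩ := MBAux.mem_xfam hX
          by_cases hXeq : X.verts = e
          · exact hXeq ▸ hwe
          · exfalso
            have := hmat X.verts hXe e he hXeq
            have hx' : x ∈ X.verts ∩ e := Finset.mem_inter.mpr ⟨hXx, hxe⟩
            rw [this] at hx'
            exact Finset.notMem_empty x hx'
      · push_neg at hxe
        have : ((G.verts).erase x).Nonempty := by
          rw [← Finset.card_pos, Finset.card_erase_of_mem hxv]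
          omega
        obtain ⟨y, hy⟩ := this
        rw [Finset.mem_erase] at hy
        refine ⟨y, ⟨hy.2, ?_, fun X hX => ?_⟩, trivial⟩
        · show y ∉ insert x G.marked
          rw [hm]
          simpa using hy.1
        · obtain ⟨hXe, hXx⟩ := MBAux.mem_xfam hX
          exact absurd hXx (hxe X.verts hXe)
    · intro hJ e he f hf hef
      by_contra hne
      obtain ⟨x, hx⟩ := Finset.nonempty_iff_ne_empty.mpr hne
      rw [Finset.mem_inter] at hx
      have hxv : x ∈ G.verts := (hval.2.1 e he).1 hx.1
      have hJ' : ∀ x ∈ G.verts \ G.marked,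
          ∃ y ∈ MB.inter (G.plus x) (MB.xFam MB.famTriv2 G x), True := hJ
      obtain ⟨y, ⟨hyv, hym, hyX⟩, -⟩ := hJ' x
        (Finset.mem_sdiff.mpr ⟨hxv, by rw [hm]; exact Finset.notMem_empty x⟩)
      have hyx : y ≠ x := by
        intro h
        apply hym
        show y ∈ insert x G.marked
        rw [h]
        exact Finset.mem_insert_self x _
      have hye : y ∈ e := hyX _ (MBAux.edge_mem_xfam hval hunif hm he hx.1)
      have hyf : y ∈ f := hyX _ (MBAux.edge_mem_xfam hval hunif hm hf hx.2)
      obtain ⟨a, hax, hea⟩ := MBAux.edge_two_mem (hunif e he) hx.1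
      obtain ⟨b, hbx, hfb⟩ := MBAux.edge_two_mem (hunif f hf) hx.2
      have hya : y = a := by
        rcases Finset.mem_insert.mp (hea ▸ hye) with h | h
        exacts [absurd h hyx, Finset.mem_singleton.mp h]
      have hyb : y = b := by
        rcases Finset.mem_insert.mp (hfb ▸ hyf) with h | h
        exacts [absurd h hyx, Finset.mem_singleton.mp h]
      exact hef (by rw [hea, hfb, ← hya, ← hyb])
  exact ⟨hBWmat.trans hMatJ, hBWmat⟩
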